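/- Let x and y be n×n positive definite Hermitian complex matrices such that log(xy) = log(x) + log(y), where log denotes the principal matrix logarithm. Then xy = yx. Equivalently: if a and b are Hermitian n×n complex matrices with exp(a+b) = exp(a)·exp(b), then exp(a)·exp(b) = exp(b)·exp(a). -/

import Mathlib

open Matrix

/-- **Proposition 4.** If `a`, `b` are Hermitian `n × n` complex matrices (the
principal logarithms of the positive definite Hermitian matrices `x = exp a`,
`y = exp b`) and `exp (a + b) = exp a * exp b` (i.e. `log (x*y) = log x + log y`),
then `x` and `y` commute. -/
theorem prop4 (n : ℕ) (a b : Matrix (Fin n) (Fin n) ℂ)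
    (ha : a.IsHermitian) (hb : b.IsHermitian)
    (h : NormedSpace.exp (a + b) = NormedSpace.exp a * NormedSpace.exp b) :
    NormedSpace.exp a * NormedSpace.exp b =
      NormedSpace.exp b * NormedSpace.exp a := by
  have key : (NormedSpace.exp (a + b))ᴴ = NormedSpace.exp (a + b) := by
    rw [← Matrix.exp_conjTranspose]
    congr 1
    exact ha.add hb
  rw [h, conjTranspose_mul, ← Matrix.exp_conjTranspose, ← Matrix.exp_conjTranspose,
    ha, hb] at key
  exact key.symm
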